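/- A system Σ in driving variable form is an implementation of a contract C = (A, G) if and only if A ∘ Σ ≼ G. -/

import Mathlib

/-- A linear system in driving variable form `ẋ = A x + G d`, `w = C x`, `0 = H x`. -/
structure DVSystem (X W D Y : Type)
    [AddCommGroup X] [Module ℝ X] [AddCommGroup W] [Module ℝ W]
    [AddCommGroup D] [Module ℝ D] [AddCommGroup Y] [Module ℝ Y] where
  A : X →ₗ[ℝ] X
  G : D →ₗ[ℝ] X
  C : X →ₗ[ℝ] W
  H : X →ₗ[ℝ] Y

namespace DVSystem

section basic

variable {X W D Y : Type}
  [AddCommGroup X] [Module ℝ X] [AddCommGroup W] [Module ℝ W]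
  [AddCommGroup D] [Module ℝ D] [AddCommGroup Y] [Module ℝ Y]

/-- A subspace `U` is consistent-admissible if `A U ⊆ U + im G` and `U ⊆ ker H`. -/
def Admissible (P : DVSystem X W D Y) (U : Submodule ℝ X) : Prop :=
  U.map P.A ≤ U ⊔ LinearMap.range P.G ∧ U ≤ LinearMap.ker P.H

/-- The consistent subspace `V*`: the largest consistent-admissible subspace. -/
def V (P : DVSystem X W D Y) : Submodule ℝ X :=
  sSup {U | P.Admissible U}

end basic

section sim

variable {W : Type} [AddCommGroup W] [Module ℝ W]
variable {X₁ D₁ Y₁ : Type} [AddCommGroup X₁] [Module ℝ X₁]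
  [AddCommGroup D₁] [Module ℝ D₁] [AddCommGroup Y₁] [Module ℝ Y₁]
variable {X₂ D₂ Y₂ : Type} [AddCommGroup X₂] [Module ℝ X₂]
  [AddCommGroup D₂] [Module ℝ D₂] [AddCommGroup Y₂] [Module ℝ Y₂]

/-- Items (i)-(ii) of the (algebraic) definition of a simulation relation. -/
def SimConds (P₁ : DVSystem X₁ W D₁ Y₁) (P₂ : DVSystem X₂ W D₂ Y₂)
    (S : Submodule ℝ (X₁ × X₂)) : Prop :=
  ∀ x₁ x₂, (x₁, x₂) ∈ S →
    (∀ d₁ : D₁, P₁.A x₁ + P₁.G d₁ ∈ P₁.V →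
      ∃ d₂ : D₂, P₂.A x₂ + P₂.G d₂ ∈ P₂.V ∧
        (P₁.A x₁ + P₁.G d₁, P₂.A x₂ + P₂.G d₂) ∈ S) ∧
    P₁.C x₁ = P₂.C x₂

/-- `S` is a simulation relation of `P₁` by `P₂`. -/
def IsSimRel (P₁ : DVSystem X₁ W D₁ Y₁) (P₂ : DVSystem X₂ W D₂ Y₂)
    (S : Submodule ℝ (X₁ × X₂)) : Prop :=
  S.map (LinearMap.fst ℝ X₁ X₂) ≤ P₁.V ∧ S.map (LinearMap.snd ℝ X₁ X₂) ≤ P₂.V ∧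
    SimConds P₁ P₂ S

/-- `S` is a full simulation relation of `P₁` by `P₂`: in addition `π₁(S) = V₁*`. -/
def IsFullSimRel (P₁ : DVSystem X₁ W D₁ Y₁) (P₂ : DVSystem X₂ W D₂ Y₂)
    (S : Submodule ℝ (X₁ × X₂)) : Prop :=
  IsSimRel P₁ P₂ S ∧ S.map (LinearMap.fst ℝ X₁ X₂) = P₁.V

/-- `P₁ ≼ P₂`: `P₁` is simulated by `P₂`. -/
def Simulates (P₁ : DVSystem X₁ W D₁ Y₁) (P₂ : DVSystem X₂ W D₂ Y₂) : Prop :=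
  ∃ S : Submodule ℝ (X₁ × X₂), IsFullSimRel P₁ P₂ S

/-- The composition `P₁ ∘ P₂` obtained by sharing the external variable `w₁ = w₂`. -/
noncomputable def comp (P₁ : DVSystem X₁ W D₁ Y₁) (P₂ : DVSystem X₂ W D₂ Y₂) :
    DVSystem (X₁ × X₂) W (D₁ × D₂) (Y₁ × Y₂ × W) where
  A := P₁.A.prodMap P₂.A
  G := P₁.G.prodMap P₂.G
  C := (1/2 : ℝ) • (P₁.C ∘ₗ LinearMap.fst ℝ X₁ X₂ + P₂.C ∘ₗ LinearMap.snd ℝ X₁ X₂)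
  H := (P₁.H ∘ₗ LinearMap.fst ℝ X₁ X₂).prod
    ((P₂.H ∘ₗ LinearMap.snd ℝ X₁ X₂).prod
      (P₁.C ∘ₗ LinearMap.fst ℝ X₁ X₂ - P₂.C ∘ₗ LinearMap.snd ℝ X₁ X₂))

end sim

section relcomp

variable {X₁ X₂ X₃ : Type} [AddCommGroup X₁] [Module ℝ X₁]
  [AddCommGroup X₂] [Module ℝ X₂] [AddCommGroup X₃] [Module ℝ X₃]

/-- Composition of linear relations:
`{(x₁, x₃) | ∃ x₂, (x₁, x₂) ∈ S₁₂ ∧ (x₂, x₃) ∈ S₂₃}`. -/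
def relComp (S₁₂ : Submodule ℝ (X₁ × X₂)) (S₂₃ : Submodule ℝ (X₂ × X₃)) :
    Submodule ℝ (X₁ × X₃) where
  carrier := {p | ∃ x₂, (p.1, x₂) ∈ S₁₂ ∧ (x₂, p.2) ∈ S₂₃}
  zero_mem' := ⟨0, by exact S₁₂.zero_mem, by exact S₂₃.zero_mem⟩
  add_mem' := by
    rintro a b ⟨y, hy1, hy2⟩ ⟨z, hz1, hz2⟩
    exact ⟨y + z, S₁₂.add_mem hy1 hz1, S₂₃.add_mem hy2 hz2⟩
  smul_mem' := by
    rintro c a ⟨y, h1, h2⟩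
    exact ⟨c • y, S₁₂.smul_mem c h1, S₂₃.smul_mem c h2⟩

/-- The pairing `{(x, (x₁, x₂)) | (x, x₁) ∈ S₁ ∧ (x, x₂) ∈ S₂}` of two relations. -/
def pairRel (S₁ : Submodule ℝ (X₁ × X₂)) (S₂ : Submodule ℝ (X₁ × X₃)) :
    Submodule ℝ (X₁ × X₂ × X₃) where
  carrier := {p | (p.1, p.2.1) ∈ S₁ ∧ (p.1, p.2.2) ∈ S₂}
  zero_mem' := ⟨by exact S₁.zero_mem, by exact S₂.zero_mem⟩
  add_mem' := by
    rintro a b ⟨ha1, ha2⟩ ⟨hb1, hb2⟩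
    exact ⟨S₁.add_mem ha1 hb1, S₂.add_mem ha2 hb2⟩
  smul_mem' := by
    rintro c a ⟨h1, h2⟩
    exact ⟨S₁.smul_mem c h1, S₂.smul_mem c h2⟩

end relcomp

section contract

variable {W : Type} [AddCommGroup W] [Module ℝ W]
variable {X D Y Xa Da Ya Xg Dg Yg : Type}
  [AddCommGroup X] [Module ℝ X] [AddCommGroup D] [Module ℝ D]
  [AddCommGroup Y] [Module ℝ Y]
  [AddCommGroup Xa] [Module ℝ Xa] [AddCommGroup Da] [Module ℝ Da]
  [AddCommGroup Ya] [Module ℝ Ya]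
  [AddCommGroup Xg] [Module ℝ Xg] [AddCommGroup Dg] [Module ℝ Dg]
  [AddCommGroup Yg] [Module ℝ Yg]

/-- `Sys` implements the contract `(Ass, Gar)` if `E ∘ Sys ≼ Gar` for every
compatible environment `E`, i.e., every environment with `E ≼ Ass`. -/
def Implements (Sys : DVSystem X W D Y)
    (Ass : DVSystem Xa W Da Ya) (Gar : DVSystem Xg W Dg Yg) : Prop :=
  ∀ (Xe De Ye : Type) [AddCommGroup Xe] [Module ℝ Xe] [FiniteDimensional ℝ Xe]
    [AddCommGroup De] [Module ℝ De] [FiniteDimensional ℝ De]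
    [AddCommGroup Ye] [Module ℝ Ye] [FiniteDimensional ℝ Ye]
    (E : DVSystem Xe W De Ye),
    Simulates E Ass → Simulates (comp E Sys) Gar

end contract

section refine

variable {W : Type} [AddCommGroup W] [Module ℝ W]
variable {Xa Da Ya Xg Dg Yg Xa' Da' Ya' Xg' Dg' Yg' : Type}
  [AddCommGroup Xa] [Module ℝ Xa] [AddCommGroup Da] [Module ℝ Da]
  [AddCommGroup Ya] [Module ℝ Ya]
  [AddCommGroup Xg] [Module ℝ Xg] [AddCommGroup Dg] [Module ℝ Dg]
  [AddCommGroup Yg] [Module ℝ Yg]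
  [AddCommGroup Xa'] [Module ℝ Xa'] [AddCommGroup Da'] [Module ℝ Da']
  [AddCommGroup Ya'] [Module ℝ Ya']
  [AddCommGroup Xg'] [Module ℝ Xg'] [AddCommGroup Dg'] [Module ℝ Dg']
  [AddCommGroup Yg'] [Module ℝ Yg']

/-- The contract `(Ass', Gar')` refines the contract `(Ass, Gar)`:
`Ass ≼ Ass'` and `Ass ∘ Gar' ≼ Gar`. -/
def Refines (Ass' : DVSystem Xa' W Da' Ya') (Gar' : DVSystem Xg' W Dg' Yg')
    (Ass : DVSystem Xa W Da Ya) (Gar : DVSystem Xg W Dg Yg) : Prop :=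
  Simulates Ass Ass' ∧ Simulates (comp Ass Gar') Gar

end refine

section aux

variable {W : Type} [AddCommGroup W] [Module ℝ W]
variable {X₁ D₁ Y₁ : Type} [AddCommGroup X₁] [Module ℝ X₁]
  [AddCommGroup D₁] [Module ℝ D₁] [AddCommGroup Y₁] [Module ℝ Y₁]
variable {X₂ D₂ Y₂ : Type} [AddCommGroup X₂] [Module ℝ X₂]
  [AddCommGroup D₂] [Module ℝ D₂] [AddCommGroup Y₂] [Module ℝ Y₂]

lemma admissible_V (P : DVSystem X₁ W D₁ Y₁) : P.Admissible P.V := by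
  constructor
  · rw [V, (Submodule.gc_map_comap P.A).l_sSup]
    apply iSup_le; intro U; apply iSup_le; intro hU
    exact le_trans hU.1 (sup_le_sup (le_sSup hU) le_rfl)
  · exact sSup_le fun U hU => hU.2

lemma le_V {P : DVSystem X₁ W D₁ Y₁} {U : Submodule ℝ X₁} (h : P.Admissible U) : U ≤ P.V :=
  le_sSup h

lemma V_le_ker (P : DVSystem X₁ W D₁ Y₁) : P.V ≤ LinearMap.ker P.H :=
  (admissible_V P).2

lemma mem_ker_comp_H (P₁ : DVSystem X₁ W D₁ Y₁) (P₂ : DVSystem X₂ W D₂ Y₂)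
    (x₁ : X₁) (x₂ : X₂) :
    (x₁, x₂) ∈ LinearMap.ker (comp P₁ P₂).H ↔
      P₁.H x₁ = 0 ∧ P₂.H x₂ = 0 ∧ P₁.C x₁ = P₂.C x₂ := by
  simp [comp, LinearMap.mem_ker, Prod.ext_iff, sub_eq_zero, and_assoc]

lemma comp_apply_A (P₁ : DVSystem X₁ W D₁ Y₁) (P₂ : DVSystem X₂ W D₂ Y₂)
    (p : X₁ × X₂) (d : D₁ × D₂) :
    (comp P₁ P₂).A p + (comp P₁ P₂).G d = (P₁.A p.1 + P₁.G d.1, P₂.A p.2 + P₂.G d.2) := rfl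

lemma comp_V_fst (P₁ : DVSystem X₁ W D₁ Y₁) (P₂ : DVSystem X₂ W D₂ Y₂) :
    ((comp P₁ P₂).V).map (LinearMap.fst ℝ X₁ X₂) ≤ P₁.V := by
  apply le_V
  constructor
  · rintro _ ⟨_, ⟨p, hp, rfl⟩, rfl⟩
    have h := (admissible_V (comp P₁ P₂)).1 (Submodule.mem_map_of_mem hp)
    rw [Submodule.mem_sup] at h
    obtain ⟨v, hv, g, hg, hvg⟩ := h
    obtain ⟨d, rfl⟩ := hg
    refine Submodule.mem_sup.mpr ⟨v.1, Submodule.mem_map_of_mem hv, P₁.G d.1, ⟨d.1, rfl⟩, ?_⟩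
    have := congrArg Prod.fst hvg
    simpa [comp] using this
  · rintro _ ⟨p, hp, rfl⟩
    have := V_le_ker (comp P₁ P₂) hp
    rw [show p = (p.1, p.2) from rfl, mem_ker_comp_H] at this
    exact this.1

lemma comp_V_snd (P₁ : DVSystem X₁ W D₁ Y₁) (P₂ : DVSystem X₂ W D₂ Y₂) :
    ((comp P₁ P₂).V).map (LinearMap.snd ℝ X₁ X₂) ≤ P₂.V := by
  apply le_V
  constructor
  · rintro _ ⟨_, ⟨p, hp, rfl⟩, rfl⟩
    have h := (admissible_V (comp P₁ P₂)).1 (Submodule.mem_map_of_mem hp)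
    rw [Submodule.mem_sup] at h
    obtain ⟨v, hv, g, hg, hvg⟩ := h
    obtain ⟨d, rfl⟩ := hg
    refine Submodule.mem_sup.mpr ⟨v.2, Submodule.mem_map_of_mem hv, P₂.G d.2, ⟨d.2, rfl⟩, ?_⟩
    have := congrArg Prod.snd hvg
    simpa [comp] using this
  · rintro _ ⟨p, hp, rfl⟩
    have := V_le_ker (comp P₁ P₂) hp
    rw [show p = (p.1, p.2) from rfl, mem_ker_comp_H] at this
    exact this.2.1

/-- The diagonal relation on a subspace. -/
def diagRel (U : Submodule ℝ X₁) : Submodule ℝ (X₁ × X₁) where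
  carrier := {p | p.1 = p.2 ∧ p.1 ∈ U}
  zero_mem' := ⟨rfl, U.zero_mem⟩
  add_mem' := by
    rintro a b ⟨ha, ha'⟩ ⟨hb, hb'⟩
    exact ⟨by show a.1 + b.1 = a.2 + b.2; rw [ha, hb], U.add_mem ha' hb'⟩
  smul_mem' := by
    rintro c a ⟨h, h'⟩
    exact ⟨by show c • a.1 = c • a.2; rw [h], U.smul_mem c h'⟩

lemma simulates_refl (P : DVSystem X₁ W D₁ Y₁) : Simulates P P := by
  refine ⟨diagRel P.V, ⟨⟨?_, ?_, ?_⟩, ?_⟩⟩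
  · rintro _ ⟨p, ⟨h, h'⟩, rfl⟩; exact h'
  · rintro _ ⟨p, ⟨h, h'⟩, rfl⟩; show p.2 ∈ P.V; rw [← h]; exact h'
  · rintro x₁ x₂ ⟨h, h'⟩
    dsimp only at h
    subst h
    exact ⟨fun d₁ hd => ⟨d₁, hd, rfl, hd⟩, rfl⟩
  · apply le_antisymm
    · rintro _ ⟨p, ⟨h, h'⟩, rfl⟩; exact h'
    · intro x hx
      exact ⟨(x, x), ⟨rfl, hx⟩, rfl⟩

/-- Composition of a flipped relation with a relation sharing the same first space. -/
def cospanRel {X₃ : Type} [AddCommGroup X₃] [Module ℝ X₃]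
    (S₁₂ : Submodule ℝ (X₂ × X₁)) (S₂₃ : Submodule ℝ (X₂ × X₃)) :
    Submodule ℝ (X₁ × X₃) where
  carrier := {p | ∃ x₂, (x₂, p.1) ∈ S₁₂ ∧ (x₂, p.2) ∈ S₂₃}
  zero_mem' := ⟨0, by exact S₁₂.zero_mem, by exact S₂₃.zero_mem⟩
  add_mem' := by
    rintro a b ⟨y, hy1, hy2⟩ ⟨z, hz1, hz2⟩
    exact ⟨y + z, S₁₂.add_mem hy1 hz1, S₂₃.add_mem hy2 hz2⟩
  smul_mem' := by
    rintro c a ⟨y, h1, h2⟩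
    exact ⟨c • y, S₁₂.smul_mem c h1, S₂₃.smul_mem c h2⟩

/-- The relation used to witness `E ∘ Σ ≼ G`. -/
def contractRel {Xe X Xa Xg : Type}
    [AddCommGroup Xe] [Module ℝ Xe] [AddCommGroup X] [Module ℝ X]
    [AddCommGroup Xa] [Module ℝ Xa] [AddCommGroup Xg] [Module ℝ Xg]
    (S_EA : Submodule ℝ (Xe × Xa)) (VE : Submodule ℝ (Xe × X))
    (S : Submodule ℝ ((Xa × X) × Xg)) : Submodule ℝ ((Xe × X) × Xg) where
  carrier := {p | p.1 ∈ VE ∧ ∃ xa, (p.1.1, xa) ∈ S_EA ∧ ((xa, p.1.2), p.2) ∈ S}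
  zero_mem' := ⟨VE.zero_mem, 0, by exact S_EA.zero_mem, by exact S.zero_mem⟩
  add_mem' := by
    rintro a b ⟨haV, ya, ha1, ha2⟩ ⟨hbV, yb, hb1, hb2⟩
    exact ⟨VE.add_mem haV hbV, ya + yb, S_EA.add_mem ha1 hb1, S.add_mem ha2 hb2⟩
  smul_mem' := by
    rintro c a ⟨hV, y, h1, h2⟩
    exact ⟨VE.smul_mem c hV, c • y, S_EA.smul_mem c h1, S.smul_mem c h2⟩

end aux

section key

variable {W : Type} [AddCommGroup W] [Module ℝ W]
variable {Xe De Ye : Type} [AddCommGroup Xe] [Module ℝ Xe]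
  [AddCommGroup De] [Module ℝ De] [AddCommGroup Ye] [Module ℝ Ye]
variable {X D Y : Type} [AddCommGroup X] [Module ℝ X]
  [AddCommGroup D] [Module ℝ D] [AddCommGroup Y] [Module ℝ Y]
variable {Xa Da Ya : Type} [AddCommGroup Xa] [Module ℝ Xa]
  [AddCommGroup Da] [Module ℝ Da] [AddCommGroup Ya] [Module ℝ Ya]
variable {Xg Dg Yg : Type} [AddCommGroup Xg] [Module ℝ Xg]
  [AddCommGroup Dg] [Module ℝ Dg] [AddCommGroup Yg] [Module ℝ Yg]

lemma cospan_le_V (E : DVSystem Xe W De Ye) (Sys : DVSystem X W D Y)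
    (Ass : DVSystem Xa W Da Ya) (S_EA : Submodule ℝ (Xe × Xa))
    (hEA : IsFullSimRel E Ass S_EA) :
    cospanRel S_EA (comp E Sys).V ≤ (comp Ass Sys).V := by
  apply le_V
  constructor
  · rintro _ ⟨⟨xa, x⟩, ⟨xe, he1, he2⟩, rfl⟩
    -- step the pair (xe, x) inside V(comp E Sys)
    have hstep := (admissible_V (comp E Sys)).1 (Submodule.mem_map_of_mem he2)
    rw [Submodule.mem_sup] at hstep
    obtain ⟨v, hv, g, hg, hvg⟩ := hstep
    obtain ⟨⟨de, ds⟩, rfl⟩ := hg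
    have heq : v.1 + E.G de = E.A xe := by
      have := congrArg Prod.fst hvg
      simpa [comp] using this
    have hvg1 : E.A xe + E.G (-de) = v.1 := by
      rw [map_neg, ← heq]; abel
    have hvg2 : v.2 + Sys.G ds = Sys.A x := by
      have := congrArg Prod.snd hvg
      simpa [comp] using this
    have hv1V : E.A xe + E.G (-de) ∈ E.V := by
      rw [hvg1]; exact comp_V_fst E Sys (Submodule.mem_map_of_mem hv)
    obtain ⟨da, hda, hpair⟩ := (hEA.1.2.2 xe xa he1).1 (-de) hv1V
    rw [hvg1] at hpair
    refine Submodule.mem_sup.mpr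
      ⟨(Ass.A xa + Ass.G da, v.2), ⟨v.1, hpair, by simpa using hv⟩,
        (Ass.G (-da), Sys.G ds), ⟨(-da, ds), rfl⟩, ?_⟩
    have : (comp Ass Sys).A (xa, x) = (Ass.A xa, Sys.A x) := rfl
    rw [this, Prod.mk_add_mk, Prod.mk.injEq]
    constructor
    · rw [map_neg]; abel
    · exact hvg2
  · rintro ⟨xa, x⟩ ⟨xe, he1, he2⟩
    have hk := V_le_ker (comp E Sys) he2
    rw [mem_ker_comp_H] at hk
    rw [mem_ker_comp_H]
    have hCe : E.C xe = Ass.C xa := (hEA.1.2.2 xe xa he1).2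
    have hxa : xa ∈ Ass.V := hEA.1.2.1 ⟨(xe, xa), he1, rfl⟩
    exact ⟨V_le_ker Ass hxa, hk.2.1, by rw [← hCe]; exact hk.2.2⟩

end key

end DVSystem

open DVSystem

/-- A system implements the contract `(Ass, Gar)` iff `Ass ∘ Σ ≼ Gar`. -/
theorem implements_iff_comp_simulates {W : Type} [AddCommGroup W] [Module ℝ W] [FiniteDimensional ℝ W]
    {X D Y : Type} [AddCommGroup X] [Module ℝ X] [FiniteDimensional ℝ X]
    [AddCommGroup D] [Module ℝ D] [FiniteDimensional ℝ D]
    [AddCommGroup Y] [Module ℝ Y] [FiniteDimensional ℝ Y]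
    {Xa Da Ya : Type} [AddCommGroup Xa] [Module ℝ Xa] [FiniteDimensional ℝ Xa]
    [AddCommGroup Da] [Module ℝ Da] [FiniteDimensional ℝ Da]
    [AddCommGroup Ya] [Module ℝ Ya] [FiniteDimensional ℝ Ya]
    {Xg Dg Yg : Type} [AddCommGroup Xg] [Module ℝ Xg] [FiniteDimensional ℝ Xg]
    [AddCommGroup Dg] [Module ℝ Dg] [FiniteDimensional ℝ Dg]
    [AddCommGroup Yg] [Module ℝ Yg] [FiniteDimensional ℝ Yg]
    (Sys : DVSystem X W D Y) (Ass : DVSystem Xa W Da Ya) (Gar : DVSystem Xg W Dg Yg) :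
    Implements Sys Ass Gar ↔ Simulates (comp Ass Sys) Gar := by
  constructor
  · intro h
    exact h Xa Da Ya Ass (simulates_refl Ass)
  · rintro ⟨S, hS⟩
    intro Xe De Ye _ _ _ _ _ _ _ _ _ E hE
    obtain ⟨S_EA, hEA⟩ := hE
    refine ⟨contractRel S_EA (comp E Sys).V S, ⟨?_, ?_, ?_⟩, ?_⟩
    · rintro _ ⟨p, ⟨hV, _⟩, rfl⟩
      exact hV
    · rintro _ ⟨p, ⟨_, xa, _, h2⟩, rfl⟩
      exact hS.1.2.1 ⟨((xa, p.1.2), p.2), h2, rfl⟩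
    · rintro p xg ⟨hV, xa, h1, h2⟩
      constructor
      · rintro ⟨de, ds⟩ hd
        rw [comp_apply_A] at hd
        have hxeV : E.A p.1 + E.G de ∈ E.V :=
          comp_V_fst E Sys (Submodule.mem_map_of_mem hd)
        obtain ⟨da, hda, hpairEA⟩ := (hEA.1.2.2 p.1 xa h1).1 de hxeV
        have hT : (Ass.A xa + Ass.G da, Sys.A p.2 + Sys.G ds) ∈ (comp Ass Sys).V :=
          cospan_le_V E Sys Ass S_EA hEA ⟨E.A p.1 + E.G de, hpairEA, hd⟩
        have hcond := (hS.1.2.2 (xa, p.2) xg h2).1 (da, ds)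
        rw [comp_apply_A] at hcond
        obtain ⟨dg, hdg, hpairS⟩ := hcond hT
        refine ⟨dg, hdg, ?_⟩
        rw [comp_apply_A]
        exact ⟨hd, Ass.A xa + Ass.G da, hpairEA, hpairS⟩
      · have hCa : E.C p.1 = Ass.C xa := (hEA.1.2.2 p.1 xa h1).2
        have hCg := (hS.1.2.2 (xa, p.2) xg h2).2
        simp only [comp, LinearMap.smul_apply, LinearMap.add_apply, LinearMap.coe_comp,
          Function.comp_apply, LinearMap.fst_apply, LinearMap.snd_apply] at hCg ⊢
        rw [hCa]
        exact hCg
    · apply le_antisymm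
      · rintro _ ⟨p, ⟨hV, _⟩, rfl⟩
        exact hV
      · intro p hp
        have hxe : p.1 ∈ E.V := comp_V_fst E Sys (Submodule.mem_map_of_mem hp)
        rw [← hEA.2] at hxe
        obtain ⟨⟨xe', xa⟩, h1, h1'⟩ := hxe
        rw [show xe' = p.1 from h1'] at h1
        have hT : (xa, p.2) ∈ (comp Ass Sys).V :=
          cospan_le_V E Sys Ass S_EA hEA ⟨p.1, h1, hp⟩
        rw [← hS.2] at hT
        obtain ⟨⟨q, xg⟩, h2, h2'⟩ := hT
        rw [show q = (xa, p.2) from h2'] at h2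
        exact ⟨(p, xg), ⟨hp, xa, h1, h2⟩, rfl⟩
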